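/- Let U be a Hilbert C*-module over a unital C*-algebra A and F : Ω → U weakly measurable. Then F is a continuous frame (i.e., there exist A₀, B > 0 with A₀⟨f,f⟩ ≤ ∫_Ω ⟨f,F(ω)⟩⟨F(ω),f⟩ dμ(ω) ≤ B⟨f,f⟩ in the order of A, for all f) if and only if there exist constants A₁, B₁ > 0 such that A₁‖⟨f,f⟩‖ ≤ ‖∫_Ω ⟨f,F(ω)⟩⟨F(ω),f⟩ dμ(ω)‖ ≤ B₁‖⟨f,f⟩‖ for all f ∈ U. -/

import Mathlib

open MeasureTheory CStarModule
open scoped RightActions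

/-- The Hilbert C⋆-module class as it stood in Mathlib (December 2024): right `Aᵐᵒᵖ`-action,
`⟪x, y <• a⟫ = ⟪x, y⟫ * a`. Mathlib's `CStarModule` now uses a left action with another
convention, so the old class is spelled out here. -/
class RightCStarModule (A E : Type*) [NonUnitalSemiring A] [StarRing A]
    [Module ℂ A] [AddCommGroup E] [Module ℂ E] [PartialOrder A] [SMul Aᵐᵒᵖ E] [Norm A] [Norm E]
    extends Inner A E where
  inner_add_right {x} {y} {z} : inner x (y + z) = inner x y + inner x z
  inner_self_nonneg {x} : 0 ≤ inner x x
  inner_self {x} : inner x x = 0 ↔ x = 0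
  inner_op_smul_right {a : A} {x y : E} : inner x (y <• a) = inner x y * a
  inner_smul_right_complex {z : ℂ} {x} {y} : inner x (z • y) = z • inner x y
  star_inner x y : star (inner x y) = inner y x
  norm_eq_sqrt_norm_inner_self x : ‖x‖ = Real.sqrt ‖inner x x‖

variable {A : Type*} [CStarAlgebra A] [PartialOrder A] [StarOrderedRing A]
variable {U : Type*} [NormedAddCommGroup U] [NormedSpace ℂ U] [CompleteSpace U]
  [SMul Aᵐᵒᵖ U] [RightCStarModule A U]
variable {Ω : Type*} [MeasurableSpace Ω]

local notation "⟪" x ", " y "⟫" => (inner A x y : A)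

/-- `F : Ω → U` is a continuous frame for the Hilbert C*-module `U` with bounds `A₀`, `B`. -/
def IsContinuousFrame (μ : Measure Ω) (F : Ω → U) (A₀ B : ℝ) : Prop :=
  0 < A₀ ∧ 0 < B ∧
  (∀ f : U, StronglyMeasurable fun ω => (inner A f (F ω) : A)) ∧
  (∀ f : U, Integrable (fun ω => (inner A f (F ω) : A) * inner A (F ω) f) μ) ∧
  ∀ f : U, A₀ • (inner A f f : A) ≤ (∫ ω, (inner A f (F ω) : A) * inner A (F ω) f ∂μ) ∧
    (∫ ω, (inner A f (F ω) : A) * inner A (F ω) f ∂μ) ≤ B • (inner A f f : A)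

/-- `F : Ω → U` is a continuous Bessel mapping with bound `B`. -/
def IsBessel (μ : Measure Ω) (F : Ω → U) (B : ℝ) : Prop :=
  0 < B ∧
  (∀ f : U, StronglyMeasurable fun ω => (inner A f (F ω) : A)) ∧
  (∀ f : U, Integrable (fun ω => (inner A f (F ω) : A) * inner A (F ω) f) μ) ∧
  ∀ f : U, (∫ ω, (inner A f (F ω) : A) * inner A (F ω) f ∂μ) ≤ B • (inner A f f : A)

/-- `φ : Ω → A` belongs to the Hilbert `A`-module `L²(Ω, A)`. -/
def MemL2 (μ : Measure Ω) (φ : Ω → A) : Prop :=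
  AEStronglyMeasurable φ μ ∧ Integrable (fun ω => star (φ ω) * φ ω) μ

/-- `G` is a dual of the continuous Bessel mapping `F` (weak reconstruction formula). -/
def IsDual (μ : Measure Ω) (F G : Ω → U) : Prop :=
  (∃ B : ℝ, IsBessel (A := A) μ G B) ∧
  ∀ f g : U, (inner A f g : A) = ∫ ω, (inner A f (G ω) : A) * inner A (F ω) g ∂μ

open scoped NNReal

section AuxLemmas


lemma aux_rsmul_nonneg {r : ℝ} (hr : 0 ≤ r) {a : A} (ha : 0 ≤ a) : 0 ≤ r • a := by
  rw [← CFC.sqrt_mul_sqrt_self a ha]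
  have hx : star (CFC.sqrt a) = CFC.sqrt a := IsSelfAdjoint.of_nonneg (CFC.sqrt_nonneg _)
  have : r • (CFC.sqrt a * CFC.sqrt a)
      = star (Real.sqrt r • CFC.sqrt a) * (Real.sqrt r • CFC.sqrt a) := by
    rw [star_smul, star_trivial, hx, smul_mul_smul_comm, Real.mul_self_sqrt hr]
  rw [this]
  exact star_mul_self_nonneg _

lemma aux_integral_nonneg {Ω : Type*} [MeasurableSpace Ω] (μ : Measure Ω)
    {z : Ω → A} (hz : ∀ ω, 0 ≤ z ω) (hzint : Integrable z μ) : 0 ≤ ∫ ω, z ω ∂μ := by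
  by_contra hneg
  have hconv : Convex ℝ {a : A | 0 ≤ a} := fun x hx y hy p q hp hq _ =>
    add_nonneg (aux_rsmul_nonneg hp hx) (aux_rsmul_nonneg hq hy)
  obtain ⟨φ, u, hsep, hgt⟩ :=
    geometric_hahn_banach_closed_point hconv CStarAlgebra.isClosed_nonneg hneg
  have hu : (0 : ℝ) < u := by simpa using hsep 0 le_rfl
  have hφ : ∀ a : A, 0 ≤ a → φ a ≤ 0 := by
    intro a ha
    by_contra hpos
    push_neg at hpos
    have ht : (0:ℝ) ≤ (u + 1) / φ a := by positivity
    have := hsep (((u + 1) / φ a) • a) (aux_rsmul_nonneg ht ha)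
    rw [φ.map_smul, smul_eq_mul, div_mul_cancel₀ _ hpos.ne'] at this
    linarith only [this]
  have h1 : φ (∫ ω, z ω ∂μ) = ∫ ω, φ (z ω) ∂μ := (φ.integral_comp_comm hzint).symm
  have h2 : ∫ ω, φ (z ω) ∂μ ≤ 0 := integral_nonpos fun ω => hφ _ (hz ω)
  rw [h1] at hgt
  exact absurd (hgt.trans_le h2) (not_lt.mpr hu.le)

lemma aux_key {c s : A} (hc : 0 ≤ c) (hs : IsSelfAdjoint s) {K : ℝ} (hK : 0 < K)
    (h : ∀ a : A, 0 ≤ a → ‖star a * s * a‖ ≤ K * ‖star a * c * a‖) : s ≤ K • c := by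
  rcases subsingleton_or_nontrivial A with hA | hA
  · exact le_of_eq (Subsingleton.elim _ _)
  have main : ∀ ε : ℝ, 0 < ε → s ≤ K • c + algebraMap ℝ A (K * ε) := by
    intro ε hε
    set b : A := c + algebraMap ℝ A ε with hbdef
    have hεA : (0:A) ≤ algebraMap ℝ A ε := by
      rw [Algebra.algebraMap_eq_smul_one]; exact aux_rsmul_nonneg hε.le zero_le_one
    have hb0 : 0 ≤ b := add_nonneg hc hεA
    have hbu : IsUnit b :=
      CStarAlgebra.isUnit_of_le (algebraMap ℝ A ε) (le_add_of_nonneg_left hc)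
        ⟨hεA, (isUnit_iff_ne_zero.mpr hε.ne').map (algebraMap ℝ A)⟩
    have hbspec : 0 ∉ spectrum ℝ≥0 b := (spectrum.zero_notMem_iff ℝ≥0).mpr hbu
    set a : A := b ^ (-(1/2) : ℝ) with hadef
    have ha0 : 0 ≤ a := CFC.rpow_nonneg
    have hastar : star a = a := IsSelfAdjoint.of_nonneg ha0
    set r : A := b ^ ((1/2 : ℝ)) with hrdef
    have hr0 : 0 ≤ r := CFC.rpow_nonneg
    have hrstar : star r = r := IsSelfAdjoint.of_nonneg hr0
    have hra : r * a = 1 := by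
      rw [hadef, hrdef, ← CFC.rpow_add hbu]
      norm_num
      exact CFC.rpow_zero b hb0
    have har : a * r = 1 := by
      rw [hadef, hrdef, ← CFC.rpow_add hbu]
      norm_num
      exact CFC.rpow_zero b hb0
    have hrr : r * r = b := by
      rw [hrdef, ← CFC.rpow_add hbu]
      norm_num
      exact CFC.rpow_one b hb0
    have haba : a * b * a = 1 := CFC.conjugate_rpow_neg_one_half b ⟨hb0, hbu⟩
    have hca1 : star a * c * a ≤ 1 := by
      calc star a * c * a ≤ star a * b * a :=
            star_left_conjugate_le_conjugate (le_add_of_nonneg_right hεA) a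
        _ = 1 := by rw [hastar]; exact haba
    have hca0 : 0 ≤ star a * c * a := star_left_conjugate_nonneg hc a
    have hcanorm : ‖star a * c * a‖ ≤ 1 := by
      calc ‖star a * c * a‖ ≤ ‖(1:A)‖ := CStarAlgebra.norm_le_norm_of_nonneg_of_le hca0 hca1
        _ = 1 := norm_one
    have hsa_norm : ‖star a * s * a‖ ≤ K := by
      calc ‖star a * s * a‖ ≤ K * ‖star a * c * a‖ := h a ha0
        _ ≤ K * 1 := mul_le_mul_of_nonneg_left hcanorm hK.le
        _ = K := mul_one K
    have hsa_sa : IsSelfAdjoint (star a * s * a) := hs.conjugate' a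
    have hle2 : star a * s * a ≤ algebraMap ℝ A K := by
      refine hsa_sa.le_algebraMap_norm_self.trans ?_
      rw [← sub_nonneg, ← map_sub]
      rw [Algebra.algebraMap_eq_smul_one]
      exact aux_rsmul_nonneg (by linarith [norm_nonneg (star a * s * a)]) zero_le_one
    have hconj := star_left_conjugate_le_conjugate hle2 r
    rw [hrstar, hastar] at hconj
    have lhs_eq : r * (a * s * a) * r = s := by
      simp only [← mul_assoc]
      rw [hra, one_mul, mul_assoc, har, mul_one]
    have rhs_eq : r * algebraMap ℝ A K * r = K • b := by
      rw [Algebra.algebraMap_eq_smul_one, mul_smul_comm, mul_one, smul_mul_assoc, hrr]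
    rw [lhs_eq, rhs_eq] at hconj
    calc s ≤ K • b := hconj
      _ = K • c + algebraMap ℝ A (K * ε) := by
        rw [hbdef, smul_add, Algebra.algebraMap_eq_smul_one, Algebra.algebraMap_eq_smul_one,
          smul_smul]
  have tend : Filter.Tendsto (fun ε : ℝ => K • c + algebraMap ℝ A (K * ε) - s)
      (nhdsWithin 0 (Set.Ioi 0)) (nhds (K • c - s)) := by
    have hcont : Continuous fun ε : ℝ => K • c + algebraMap ℝ A (K * ε) - s := by
      exact (continuous_const.add ((continuous_algebraMap ℝ A).comp
        (continuous_const.mul continuous_id))).sub continuous_const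
    refine Filter.Tendsto.mono_left ?_ nhdsWithin_le_nhds
    simpa using hcont.tendsto 0
  have hmem : 0 ≤ K • c - s := by
    refine CStarAlgebra.isClosed_nonneg (A := A) |>.mem_of_tendsto tend ?_
    filter_upwards [self_mem_nhdsWithin] with ε hε
    exact sub_nonneg.mpr (main ε hε)
  exact sub_nonneg.mp hmem


end AuxLemmas

lemma rcm_star_inner (x y : U) : star ⟪x, y⟫ = ⟪y, x⟫ := RightCStarModule.star_inner x y

lemma rcm_inner_op_smul_right {a : A} {x y : U} : ⟪x, y <• a⟫ = ⟪x, y⟫ * a :=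
  RightCStarModule.inner_op_smul_right

lemma rcm_inner_op_smul_left {a : A} {x y : U} : ⟪x <• a, y⟫ = star a * ⟪x, y⟫ := by
  rw [← rcm_star_inner y, rcm_inner_op_smul_right, star_mul, rcm_star_inner]

lemma rcm_inner_self_nonneg {x : U} : 0 ≤ ⟪x, x⟫ := RightCStarModule.inner_self_nonneg

/-- A weakly measurable `F : Ω → U` is a continuous frame iff there are `A₁, B₁ > 0`
with `A₁‖⟨f,f⟩‖ ≤ ‖∫ ⟨f,F(ω)⟩⟨F(ω),f⟩ dμ‖ ≤ B₁‖⟨f,f⟩‖` for all `f`. -/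
theorem frame_iff_norm_bounds (μ : Measure Ω) (F : Ω → U)
    (hmeas : ∀ f : U, StronglyMeasurable fun ω => ⟪f, F ω⟫)
    (hint : ∀ f : U, Integrable (fun ω => ⟪f, F ω⟫ * ⟪F ω, f⟫) μ) :
    (∃ A₀ > (0 : ℝ), ∃ B > (0 : ℝ), ∀ f : U,
        A₀ • ⟪f, f⟫ ≤ (∫ ω, ⟪f, F ω⟫ * ⟪F ω, f⟫ ∂μ) ∧
        (∫ ω, ⟪f, F ω⟫ * ⟪F ω, f⟫ ∂μ) ≤ B • ⟪f, f⟫) ↔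
      ∃ A₁ > (0 : ℝ), ∃ B₁ > (0 : ℝ), ∀ f : U,
        A₁ * ‖⟪f, f⟫‖ ≤ ‖∫ ω, ⟪f, F ω⟫ * ⟪F ω, f⟫ ∂μ‖ ∧
        ‖∫ ω, ⟪f, F ω⟫ * ⟪F ω, f⟫ ∂μ‖ ≤ B₁ * ‖⟪f, f⟫‖ := by

  have hSsa : ∀ f : U, IsSelfAdjoint (∫ ω, ⟪f, F ω⟫ * ⟪F ω, f⟫ ∂μ) := by
    intro f
    rw [IsSelfAdjoint]
    have hstar : (∫ ω, star (⟪f, F ω⟫ * ⟪F ω, f⟫) ∂μ)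
        = star (∫ ω, ⟪f, F ω⟫ * ⟪F ω, f⟫ ∂μ) :=
      (starL' ℝ (A := A)).toContinuousLinearMap.integral_comp_comm (hint f)
    rw [← hstar]
    simp only [star_mul, rcm_star_inner]
  have hSpos : ∀ f : U, 0 ≤ ∫ ω, ⟪f, F ω⟫ * ⟪F ω, f⟫ ∂μ := by
    intro f
    refine aux_integral_nonneg μ (fun ω => ?_) (hint f)
    have := star_mul_self_nonneg (⟪F ω, f⟫)
    rwa [rcm_star_inner] at this
  have hinner : ∀ (f : U) (a : A), ⟪f <• a, f <• a⟫ = star a * ⟪f, f⟫ * a := by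
    intro f a
    rw [rcm_inner_op_smul_left, rcm_inner_op_smul_right, ← mul_assoc]
  have hconj : ∀ (f : U) (a : A), (∫ ω, ⟪f <• a, F ω⟫ * ⟪F ω, f <• a⟫ ∂μ)
      = star a * (∫ ω, ⟪f, F ω⟫ * ⟪F ω, f⟫ ∂μ) * a := by
    intro f a
    have h1 : ∀ ω, ⟪f <• a, F ω⟫ * ⟪F ω, f <• a⟫ = star a * (⟪f, F ω⟫ * ⟪F ω, f⟫) * a := by
      intro ω
      rw [rcm_inner_op_smul_left, rcm_inner_op_smul_right]
      simp only [mul_assoc]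
    simp_rw [h1]
    set L : A →L[ℝ] A := ((ContinuousLinearMap.mul ℝ A (star a)).comp
      ((ContinuousLinearMap.mul ℝ A).flip a)) with hL
    have hLx : ∀ x : A, star a * x * a = L x := by
      intro x; simp [hL, mul_assoc]
    simp_rw [hLx]
    exact L.integral_comp_comm (hint f)
  constructor
  · rintro ⟨A₀, hA₀, B, hB, h⟩
    refine ⟨A₀, hA₀, B, hB, fun f => ?_⟩
    obtain ⟨h1, h2⟩ := h f
    have hc : (0 : A) ≤ ⟪f, f⟫ := rcm_inner_self_nonneg
    have hc0 : (0 : A) ≤ A₀ • ⟪f, f⟫ := aux_rsmul_nonneg hA₀.le hc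
    constructor
    · calc A₀ * ‖⟪f, f⟫‖ = ‖A₀ • ⟪f, f⟫‖ := by
            rw [norm_smul, Real.norm_eq_abs, abs_of_pos hA₀]
        _ ≤ ‖∫ ω, ⟪f, F ω⟫ * ⟪F ω, f⟫ ∂μ‖ := CStarAlgebra.norm_le_norm_of_nonneg_of_le hc0 h1
    · calc ‖∫ ω, ⟪f, F ω⟫ * ⟪F ω, f⟫ ∂μ‖ ≤ ‖B • ⟪f, f⟫‖ :=
            CStarAlgebra.norm_le_norm_of_nonneg_of_le (hSpos f) h2
        _ = B * ‖⟪f, f⟫‖ := by rw [norm_smul, Real.norm_eq_abs, abs_of_pos hB]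
  · rintro ⟨A₁, hA₁, B₁, hB₁, h⟩
    refine ⟨A₁, hA₁, B₁, hB₁, fun f => ?_⟩
    constructor
    · have hkey : ⟪f, f⟫ ≤ A₁⁻¹ • (∫ ω, ⟪f, F ω⟫ * ⟪F ω, f⟫ ∂μ) := by
        refine aux_key (hSpos f) (IsSelfAdjoint.of_nonneg rcm_inner_self_nonneg)
          (inv_pos.mpr hA₁) ?_
        intro a ha
        have h2 := (h (f <• a)).1
        rw [hconj f a, hinner f a] at h2
        rw [inv_mul_eq_div, le_div_iff₀ hA₁]
        linarith only [h2]
      calc A₁ • ⟪f, f⟫ ≤ A₁ • (A₁⁻¹ • (∫ ω, ⟪f, F ω⟫ * ⟪F ω, f⟫ ∂μ)) := by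
            have := aux_rsmul_nonneg hA₁.le (sub_nonneg.mpr hkey)
            rw [smul_sub] at this
            exact sub_nonneg.mp this
        _ = ∫ ω, ⟪f, F ω⟫ * ⟪F ω, f⟫ ∂μ := by
            rw [smul_smul, mul_inv_cancel₀ hA₁.ne', one_smul]
    · refine aux_key rcm_inner_self_nonneg (hSsa f) hB₁ ?_
      intro a ha
      have h2 := (h (f <• a)).2
      rw [hconj f a, hinner f a] at h2
      exact h2
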